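/- Define for m ∈ ℕ₀ the real-valued Cauchy–Laguerre functions α_m(t) = (1/√2)(ψ_m(t) + conj(ψ_m(t))) and β_m(t) = (1/(i√2))(ψ_m(t) − conj(ψ_m(t))). Then for all t, u ∈ ℝ both series converge and ∑_{m=0}^∞ α_m(t) α_m(u) + ∑_{m=0}^∞ β_m(t) β_m(u) = 1/(1 + (t−u)²). -/

import Mathlib

open Real Complex

lemma auxA (t : ℝ) : (Complex.I * t - 1) ≠ 0 := by
  intro h; have := congrArg Complex.re h; simp at this

lemma auxB (t : ℝ) : (Complex.I * t + 1) ≠ 0 := by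
  intro h; have := congrArg Complex.re h; simp at this

lemma sqA (t : ℝ) : ‖Complex.I * t - 1‖ ^ 2 = 1 + t ^ 2 := by
  rw [Complex.sq_norm]
  simp [Complex.normSq_apply, Complex.sub_re, Complex.sub_im]
  ring

lemma sqB (t : ℝ) : ‖Complex.I * t + 1‖ ^ 2 = 1 + t ^ 2 := by
  rw [Complex.sq_norm]
  simp [Complex.normSq_apply, Complex.add_re, Complex.add_im]
  ring

lemma normA (t : ℝ) : ‖Complex.I * t / (Complex.I * t - 1)‖ < 1 := by
  have h := sqA t
  have h0 : (0:ℝ) < ‖Complex.I * t - 1‖ := by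
    rw [norm_pos_iff]; exact auxA t
  rw [norm_div, div_lt_one h0]
  have ht : ‖Complex.I * (t:ℂ)‖ = |t| := by
    rw [norm_mul, Complex.norm_I, one_mul, Complex.norm_real, Real.norm_eq_abs]
  rw [ht]
  nlinarith [abs_nonneg t, _root_.sq_abs t]

lemma normB (t : ℝ) : ‖Complex.I * t / (Complex.I * t + 1)‖ < 1 := by
  have h := sqB t
  have h0 : (0:ℝ) < ‖Complex.I * t + 1‖ := by
    rw [norm_pos_iff]; exact auxB t
  rw [norm_div, div_lt_one h0]
  have ht : ‖Complex.I * (t:ℂ)‖ = |t| := by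
    rw [norm_mul, Complex.norm_I, one_mul, Complex.norm_real, Real.norm_eq_abs]
  rw [ht]
  nlinarith [abs_nonneg t, _root_.sq_abs t]

noncomputable def cauchyLagPos (m : ℕ) (t : ℝ) : ℂ :=
  -(1 / (Real.sqrt 2 : ℂ)) * (Complex.I * t) ^ m / (Complex.I * t - 1) ^ (m + 1)

lemma sqrt2_ne : ((Real.sqrt 2 : ℝ) : ℂ) ≠ 0 := by
  simp [Real.sqrt_eq_zero']

lemma lag_eq (m : ℕ) (t : ℝ) :
    cauchyLagPos m t =
      (-(1 / (Real.sqrt 2 : ℂ)) * (Complex.I * t - 1)⁻¹) *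
        (Complex.I * t / (Complex.I * t - 1)) ^ m := by
  unfold cauchyLagPos
  rw [div_pow, pow_succ]
  field_simp

lemma conj_lag_eq (m : ℕ) (t : ℝ) :
    (starRingEnd ℂ) (cauchyLagPos m t) =
      ((1 / (Real.sqrt 2 : ℂ)) * (Complex.I * t + 1)⁻¹) *
        (Complex.I * t / (Complex.I * t + 1)) ^ m := by
  unfold cauchyLagPos
  simp only [map_div₀, map_mul, map_pow, map_sub, map_neg, map_one,
    Complex.conj_I, Complex.conj_ofReal, map_one]
  have h1 : -Complex.I * (t:ℂ) = -(Complex.I * t) := by ring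
  have h2 : -(Complex.I * (t:ℂ)) - 1 = -(Complex.I * t + 1) := by ring
  rw [h1, h2, neg_pow (Complex.I * (t:ℂ)) m, neg_pow _ (m+1), pow_succ (-1:ℂ) m,
    div_pow]
  rcases Nat.even_or_odd m with he | ho
  · rw [he.neg_one_pow]; field_simp; ring
  · rw [ho.neg_one_pow]; field_simp; ring

noncomputable def cauchyAlpha (m : ℕ) (t : ℝ) : ℂ :=
  (1 / (Real.sqrt 2 : ℂ)) * (cauchyLagPos m t + (starRingEnd ℂ) (cauchyLagPos m t))

noncomputable def cauchyBeta (m : ℕ) (t : ℝ) : ℂ :=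
  (1 / (Complex.I * (Real.sqrt 2 : ℂ))) * (cauchyLagPos m t - (starRingEnd ℂ) (cauchyLagPos m t))

lemma sqrt2_sq : ((Real.sqrt 2 : ℝ) : ℂ) * ((Real.sqrt 2 : ℝ) : ℂ) = 2 := by
  norm_cast
  exact Real.mul_self_sqrt (by norm_num)

lemma alpha_eq (m : ℕ) (t : ℝ) :
    cauchyAlpha m t =
      (-(1/2) * (Complex.I * t - 1)⁻¹) * (Complex.I * t / (Complex.I * t - 1)) ^ m
      + ((1/2) * (Complex.I * t + 1)⁻¹) * (Complex.I * t / (Complex.I * t + 1)) ^ m := by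
  unfold cauchyAlpha
  rw [conj_lag_eq, lag_eq]
  have key : (1 / ((Real.sqrt 2 : ℝ):ℂ)) * (1 / ((Real.sqrt 2 : ℝ):ℂ)) = 1/2 := by
    rw [div_mul_div_comm, one_mul, sqrt2_sq]
  linear_combination key * (-(Complex.I * t - 1)⁻¹ * (Complex.I * t / (Complex.I * t - 1)) ^ m
    + (Complex.I * t + 1)⁻¹ * (Complex.I * t / (Complex.I * t + 1)) ^ m)

lemma beta_eq (m : ℕ) (t : ℝ) :
    cauchyBeta m t =
      ((Complex.I/2) * (Complex.I * t - 1)⁻¹) * (Complex.I * t / (Complex.I * t - 1)) ^ m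
      + ((Complex.I/2) * (Complex.I * t + 1)⁻¹) * (Complex.I * t / (Complex.I * t + 1)) ^ m := by
  unfold cauchyBeta
  rw [conj_lag_eq, lag_eq]
  rw [show (1 / (Complex.I * ((Real.sqrt 2:ℝ):ℂ))) = -Complex.I * (1/((Real.sqrt 2:ℝ):ℂ)) from by
    rw [one_div, mul_inv, Complex.inv_I]; ring]
  have key : (1 / ((Real.sqrt 2 : ℝ):ℂ)) * (1 / ((Real.sqrt 2 : ℝ):ℂ)) = 1/2 := by
    rw [div_mul_div_comm, one_mul, sqrt2_sq]
  linear_combination key * (Complex.I * ((Complex.I * t - 1)⁻¹ * (Complex.I * t / (Complex.I * t - 1)) ^ m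
    + (Complex.I * t + 1)⁻¹ * (Complex.I * t / (Complex.I * t + 1)) ^ m))

lemma norm_mul_lt_one {x y : ℂ} (hx : ‖x‖ < 1) (hy : ‖y‖ < 1) : ‖x * y‖ < 1 := by
  rw [norm_mul]
  nlinarith [norm_nonneg x, norm_nonneg y]

lemma one_sub_ne {x : ℂ} (hx : ‖x‖ < 1) : 1 - x ≠ 0 := by
  intro h
  rw [sub_eq_zero] at h
  rw [← h] at hx
  simp at hx

lemma summable4 (A B C D : ℂ) {x y z w : ℂ}
    (hx : ‖x‖ < 1) (hy : ‖y‖ < 1) (hz : ‖z‖ < 1) (hw : ‖w‖ < 1) :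
    Summable (fun m : ℕ => A * x ^ m + B * y ^ m + C * z ^ m + D * w ^ m) :=
  ((((summable_geometric_of_norm_lt_one hx).mul_left A).add
    ((summable_geometric_of_norm_lt_one hy).mul_left B)).add
    ((summable_geometric_of_norm_lt_one hz).mul_left C)).add
    ((summable_geometric_of_norm_lt_one hw).mul_left D)

lemma tsum4 (A B C D : ℂ) {x y z w : ℂ}
    (hx : ‖x‖ < 1) (hy : ‖y‖ < 1) (hz : ‖z‖ < 1) (hw : ‖w‖ < 1) :
    ∑' m : ℕ, (A * x ^ m + B * y ^ m + C * z ^ m + D * w ^ m)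
      = A * (1 - x)⁻¹ + B * (1 - y)⁻¹ + C * (1 - z)⁻¹ + D * (1 - w)⁻¹ := by
  have sx := (summable_geometric_of_norm_lt_one hx).mul_left A
  have sy := (summable_geometric_of_norm_lt_one hy).mul_left B
  have sz := (summable_geometric_of_norm_lt_one hz).mul_left C
  have sw := (summable_geometric_of_norm_lt_one hw).mul_left D
  rw [Summable.tsum_add ((sx.add sy).add sz) sw, Summable.tsum_add (sx.add sy) sz, Summable.tsum_add sx sy,
    tsum_mul_left, tsum_mul_left, tsum_mul_left, tsum_mul_left,
    tsum_geometric_of_norm_lt_one hx, tsum_geometric_of_norm_lt_one hy,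
    tsum_geometric_of_norm_lt_one hz, tsum_geometric_of_norm_lt_one hw]

set_option maxHeartbeats 3000000 in
lemma cauchy_final_alg (t u : ℝ) (hd : 1 + ((t:ℂ) - ↑u) ^ 2 ≠ 0) (d1 : 1 - I * ((t:ℂ) + ↑u) ≠ 0) (d2 : -1 + I * ((t:ℂ) - ↑u) ≠ 0)
  (d3 : -1 - I * ((t:ℂ) - ↑u) ≠ 0) (d4 : 1 + I * ((t:ℂ) + ↑u) ≠ 0) :
  -(1 / 2) * (I * ↑t - 1)⁻¹ * (-(1 / 2) * (I * ↑u - 1)⁻¹) * ((I * ↑t - 1) * (I * ↑u - 1) * (1 - I * (↑t + ↑u))⁻¹) +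
            -(1 / 2) * (I * ↑t - 1)⁻¹ * (1 / 2 * (I * ↑u + 1)⁻¹) *
              ((I * ↑t - 1) * (I * ↑u + 1) * (-1 + I * (↑t - ↑u))⁻¹) +
          1 / 2 * (I * ↑t + 1)⁻¹ * (-(1 / 2) * (I * ↑u - 1)⁻¹) *
            ((I * ↑t + 1) * (I * ↑u - 1) * (-1 - I * (↑t - ↑u))⁻¹) +
        1 / 2 * (I * ↑t + 1)⁻¹ * (1 / 2 * (I * ↑u + 1)⁻¹) * ((I * ↑t + 1) * (I * ↑u + 1) * (1 + I * (↑t + ↑u))⁻¹) +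
      (I / 2 * (I * ↑t - 1)⁻¹ * (I / 2 * (I * ↑u - 1)⁻¹) * ((I * ↑t - 1) * (I * ↑u - 1) * (1 - I * (↑t + ↑u))⁻¹) +
            I / 2 * (I * ↑t - 1)⁻¹ * (I / 2 * (I * ↑u + 1)⁻¹) * ((I * ↑t - 1) * (I * ↑u + 1) * (-1 + I * (↑t - ↑u))⁻¹) +
          I / 2 * (I * ↑t + 1)⁻¹ * (I / 2 * (I * ↑u - 1)⁻¹) * ((I * ↑t + 1) * (I * ↑u - 1) * (-1 - I * (↑t - ↑u))⁻¹) +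
        I / 2 * (I * ↑t + 1)⁻¹ * (I / 2 * (I * ↑u + 1)⁻¹) * ((I * ↑t + 1) * (I * ↑u + 1) * (1 + I * (↑t + ↑u))⁻¹)) =
    1 / (1 + ((t:ℂ) - ↑u) ^ 2) := by
  have hP := inv_mul_cancel₀ (auxA t)
  have hQ := inv_mul_cancel₀ (auxB t)
  have hR := inv_mul_cancel₀ (auxA u)
  have hS := inv_mul_cancel₀ (auxB u)
  rw [show (-(1 / 2) * (I * (t:ℂ) - 1)⁻¹ * (-(1 / 2) * (I * (u:ℂ) - 1)⁻¹) * ((I * (t:ℂ) - 1) * (I * (u:ℂ) - 1) * (1 - I * ((t:ℂ) + ↑u))⁻¹)) = (1/4) * (1 - I * ((t:ℂ) + ↑u))⁻¹ from by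
    linear_combination ((1/4) * ((I * (u:ℂ) - 1)⁻¹ * (I * (u:ℂ) - 1)) * (1 - I * ((t:ℂ) + ↑u))⁻¹) * hP + ((1/4) * (1 - I * ((t:ℂ) + ↑u))⁻¹) * hR]
  rw [show (-(1 / 2) * (I * (t:ℂ) - 1)⁻¹ * (1 / 2 * (I * (u:ℂ) + 1)⁻¹) * ((I * (t:ℂ) - 1) * (I * (u:ℂ) + 1) * (-1 + I * ((t:ℂ) - ↑u))⁻¹)) = (-(1/4)) * (-1 + I * ((t:ℂ) - ↑u))⁻¹ from by
    linear_combination ((-(1/4)) * ((I * (u:ℂ) + 1)⁻¹ * (I * (u:ℂ) + 1)) * (-1 + I * ((t:ℂ) - ↑u))⁻¹) * hP + ((-(1/4)) * (-1 + I * ((t:ℂ) - ↑u))⁻¹) * hS]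
  rw [show (1 / 2 * (I * (t:ℂ) + 1)⁻¹ * (-(1 / 2) * (I * (u:ℂ) - 1)⁻¹) * ((I * (t:ℂ) + 1) * (I * (u:ℂ) - 1) * (-1 - I * ((t:ℂ) - ↑u))⁻¹)) = (-(1/4)) * (-1 - I * ((t:ℂ) - ↑u))⁻¹ from by
    linear_combination ((-(1/4)) * ((I * (u:ℂ) - 1)⁻¹ * (I * (u:ℂ) - 1)) * (-1 - I * ((t:ℂ) - ↑u))⁻¹) * hQ + ((-(1/4)) * (-1 - I * ((t:ℂ) - ↑u))⁻¹) * hR]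
  rw [show (1 / 2 * (I * (t:ℂ) + 1)⁻¹ * (1 / 2 * (I * (u:ℂ) + 1)⁻¹) * ((I * (t:ℂ) + 1) * (I * (u:ℂ) + 1) * (1 + I * ((t:ℂ) + ↑u))⁻¹)) = (1/4) * (1 + I * ((t:ℂ) + ↑u))⁻¹ from by
    linear_combination ((1/4) * ((I * (u:ℂ) + 1)⁻¹ * (I * (u:ℂ) + 1)) * (1 + I * ((t:ℂ) + ↑u))⁻¹) * hQ + ((1/4) * (1 + I * ((t:ℂ) + ↑u))⁻¹) * hS]
  rw [show (I / 2 * (I * (t:ℂ) - 1)⁻¹ * (I / 2 * (I * (u:ℂ) - 1)⁻¹) * ((I * (t:ℂ) - 1) * (I * (u:ℂ) - 1) * (1 - I * ((t:ℂ) + ↑u))⁻¹)) = (-(1/4)) * (1 - I * ((t:ℂ) + ↑u))⁻¹ from by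
    linear_combination ((-(1/4)) * ((I * (u:ℂ) - 1)⁻¹ * (I * (u:ℂ) - 1)) * (1 - I * ((t:ℂ) + ↑u))⁻¹) * hP + ((-(1/4)) * (1 - I * ((t:ℂ) + ↑u))⁻¹) * hR + ((1/4) * ((I * (t:ℂ) - 1)⁻¹ * (I * (t:ℂ) - 1)) * ((I * (u:ℂ) - 1)⁻¹ * (I * (u:ℂ) - 1)) * (1 - I * ((t:ℂ) + ↑u))⁻¹) * Complex.I_mul_I]
  rw [show (I / 2 * (I * (t:ℂ) - 1)⁻¹ * (I / 2 * (I * (u:ℂ) + 1)⁻¹) * ((I * (t:ℂ) - 1) * (I * (u:ℂ) + 1) * (-1 + I * ((t:ℂ) - ↑u))⁻¹)) = (-(1/4)) * (-1 + I * ((t:ℂ) - ↑u))⁻¹ from by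
    linear_combination ((-(1/4)) * ((I * (u:ℂ) + 1)⁻¹ * (I * (u:ℂ) + 1)) * (-1 + I * ((t:ℂ) - ↑u))⁻¹) * hP + ((-(1/4)) * (-1 + I * ((t:ℂ) - ↑u))⁻¹) * hS + ((1/4) * ((I * (t:ℂ) - 1)⁻¹ * (I * (t:ℂ) - 1)) * ((I * (u:ℂ) + 1)⁻¹ * (I * (u:ℂ) + 1)) * (-1 + I * ((t:ℂ) - ↑u))⁻¹) * Complex.I_mul_I]
  rw [show (I / 2 * (I * (t:ℂ) + 1)⁻¹ * (I / 2 * (I * (u:ℂ) - 1)⁻¹) * ((I * (t:ℂ) + 1) * (I * (u:ℂ) - 1) * (-1 - I * ((t:ℂ) - ↑u))⁻¹)) = (-(1/4)) * (-1 - I * ((t:ℂ) - ↑u))⁻¹ from by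
    linear_combination ((-(1/4)) * ((I * (u:ℂ) - 1)⁻¹ * (I * (u:ℂ) - 1)) * (-1 - I * ((t:ℂ) - ↑u))⁻¹) * hQ + ((-(1/4)) * (-1 - I * ((t:ℂ) - ↑u))⁻¹) * hR + ((1/4) * ((I * (t:ℂ) + 1)⁻¹ * (I * (t:ℂ) + 1)) * ((I * (u:ℂ) - 1)⁻¹ * (I * (u:ℂ) - 1)) * (-1 - I * ((t:ℂ) - ↑u))⁻¹) * Complex.I_mul_I]
  rw [show (I / 2 * (I * (t:ℂ) + 1)⁻¹ * (I / 2 * (I * (u:ℂ) + 1)⁻¹) * ((I * (t:ℂ) + 1) * (I * (u:ℂ) + 1) * (1 + I * ((t:ℂ) + ↑u))⁻¹)) = (-(1/4)) * (1 + I * ((t:ℂ) + ↑u))⁻¹ from by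
    linear_combination ((-(1/4)) * ((I * (u:ℂ) + 1)⁻¹ * (I * (u:ℂ) + 1)) * (1 + I * ((t:ℂ) + ↑u))⁻¹) * hQ + ((-(1/4)) * (1 + I * ((t:ℂ) + ↑u))⁻¹) * hS + ((1/4) * ((I * (t:ℂ) + 1)⁻¹ * (I * (t:ℂ) + 1)) * ((I * (u:ℂ) + 1)⁻¹ * (I * (u:ℂ) + 1)) * (1 + I * ((t:ℂ) + ↑u))⁻¹) * Complex.I_mul_I]
  have hg2 := inv_mul_cancel₀ d2
  have hg3 := inv_mul_cancel₀ d3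
  have hD := inv_mul_cancel₀ hd
  linear_combination (-(1/2) * (1 + ((t:ℂ) - ↑u)^2)⁻¹ * (-1 - I * ((t:ℂ) - ↑u))) * hg2
    + (-(1/2) * (1 + ((t:ℂ) - ↑u)^2)⁻¹ * (-1 + I * ((t:ℂ) - ↑u))) * hg3
    + ((1/2) * ((-1 + I * ((t:ℂ) - ↑u))⁻¹ + (-1 - I * ((t:ℂ) - ↑u))⁻¹)) * hD
    + (-(1/2) * (1 + ((t:ℂ) - ↑u)^2)⁻¹ * ((t:ℂ) - ↑u)^2 * ((-1 + I * ((t:ℂ) - ↑u))⁻¹ + (-1 - I * ((t:ℂ) - ↑u))⁻¹)) * Complex.I_mul_I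

/-- The real Cauchy–Laguerre expansion of the Cauchy kernel. -/
theorem cauchy_real_expansion (t u : ℝ) :
    Summable (fun m : ℕ => cauchyAlpha m t * cauchyAlpha m u) ∧
    Summable (fun m : ℕ => cauchyBeta m t * cauchyBeta m u) ∧
      (∑' m : ℕ, cauchyAlpha m t * cauchyAlpha m u) +
          (∑' m : ℕ, cauchyBeta m t * cauchyBeta m u) =
        1 / (1 + ((t : ℂ) - (u : ℂ)) ^ 2) := by
  have hxt := normA t
  have hyt := normB t
  have hxu := normA u
  have hyu := normB u
  have h1 := norm_mul_lt_one hxt hxu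
  have h2 := norm_mul_lt_one hxt hyu
  have h3 := norm_mul_lt_one hyt hxu
  have h4 := norm_mul_lt_one hyt hyu
  set xt := Complex.I * t / (Complex.I * t - 1) with hxtdef
  set yt := Complex.I * t / (Complex.I * t + 1) with hytdef
  set xu := Complex.I * u / (Complex.I * u - 1) with hxudef
  set yu := Complex.I * u / (Complex.I * u + 1) with hyudef
  set At := (-(1/2) * (Complex.I * (t:ℂ) - 1)⁻¹ : ℂ) with hAt
  set Bt := ((1/2) * (Complex.I * (t:ℂ) + 1)⁻¹ : ℂ) with hBt
  set Au := (-(1/2) * (Complex.I * (u:ℂ) - 1)⁻¹ : ℂ) with hAu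
  set Bu := ((1/2) * (Complex.I * (u:ℂ) + 1)⁻¹ : ℂ) with hBu
  set Ct := ((Complex.I/2) * (Complex.I * (t:ℂ) - 1)⁻¹ : ℂ) with hCt
  set Dt := ((Complex.I/2) * (Complex.I * (t:ℂ) + 1)⁻¹ : ℂ) with hDt
  set Cu := ((Complex.I/2) * (Complex.I * (u:ℂ) - 1)⁻¹ : ℂ) with hCu
  set Du := ((Complex.I/2) * (Complex.I * (u:ℂ) + 1)⁻¹ : ℂ) with hDu
  have hA : (fun m : ℕ => cauchyAlpha m t * cauchyAlpha m u)
      = fun m : ℕ => (At*Au) * (xt*xu)^m + (At*Bu) * (xt*yu)^m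
        + (Bt*Au) * (yt*xu)^m + (Bt*Bu) * (yt*yu)^m := by
    funext m
    rw [alpha_eq, alpha_eq]
    ring
  have hB : (fun m : ℕ => cauchyBeta m t * cauchyBeta m u)
      = fun m : ℕ => (Ct*Cu) * (xt*xu)^m + (Ct*Du) * (xt*yu)^m
        + (Dt*Cu) * (yt*xu)^m + (Dt*Du) * (yt*yu)^m := by
    funext m
    rw [beta_eq, beta_eq]
    ring
  refine ⟨?_, ?_, ?_⟩
  · rw [hA]; exact summable4 _ _ _ _ h1 h2 h3 h4
  · rw [hB]; exact summable4 _ _ _ _ h1 h2 h3 h4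
  · rw [hA, hB, tsum4 _ _ _ _ h1 h2 h3 h4, tsum4 _ _ _ _ h1 h2 h3 h4]
    have n1 := one_sub_ne h1
    have n2 := one_sub_ne h2
    have n3 := one_sub_ne h3
    have n4 := one_sub_ne h4
    have hd : (1 : ℂ) + ((t:ℂ) - u)^2 ≠ 0 := by
      have : (1:ℂ) + ((t:ℂ) - u)^2 = ((1 + (t - u)^2 : ℝ) : ℂ) := by push_cast; ring
      rw [this, Complex.ofReal_ne_zero]
      positivity
    have d1 : (1:ℂ) - Complex.I*((t:ℂ)+u) ≠ 0 := by
      intro h; have := congrArg Complex.re h; simp at this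
    have d2 : (-1:ℂ) + Complex.I*((t:ℂ)-u) ≠ 0 := by
      intro h; have := congrArg Complex.re h; simp at this
    have d3 : (-1:ℂ) - Complex.I*((t:ℂ)-u) ≠ 0 := by
      intro h; have := congrArg Complex.re h; simp at this
    have d4 : (1:ℂ) + Complex.I*((t:ℂ)+u) ≠ 0 := by
      intro h; have := congrArg Complex.re h; simp at this
    have e1 : (1 - xt*xu)⁻¹
        = (Complex.I*t-1)*(Complex.I*u-1) * (1 - Complex.I*((t:ℂ)+u) : ℂ)⁻¹ := by
      rw [hxtdef, hxudef,
        show (1:ℂ) - Complex.I*t/(Complex.I*t-1) * (Complex.I*u/(Complex.I*u-1))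
          = (1 - Complex.I*((t:ℂ)+u) : ℂ)/((Complex.I*t-1)*(Complex.I*u-1)) from by
          rw [eq_div_iff (mul_ne_zero (auxA t) (auxA u)), div_eq_mul_inv, div_eq_mul_inv]
          linear_combination (-(Complex.I*(t:ℂ))*(Complex.I*(u:ℂ))*((Complex.I*(u:ℂ)-1)⁻¹*(Complex.I*(u:ℂ)-1))) * inv_mul_cancel₀ (auxA t)
            + (-(Complex.I*(t:ℂ))*(Complex.I*(u:ℂ))) * inv_mul_cancel₀ (auxA u),
        inv_div, div_eq_mul_inv]
    have e2 : (1 - xt*yu)⁻¹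
        = (Complex.I*t-1)*(Complex.I*u+1) * (-1 + Complex.I*((t:ℂ)-u) : ℂ)⁻¹ := by
      rw [hxtdef, hyudef,
        show (1:ℂ) - Complex.I*t/(Complex.I*t-1) * (Complex.I*u/(Complex.I*u+1))
          = (-1 + Complex.I*((t:ℂ)-u) : ℂ)/((Complex.I*t-1)*(Complex.I*u+1)) from by
          rw [eq_div_iff (mul_ne_zero (auxA t) (auxB u)), div_eq_mul_inv, div_eq_mul_inv]
          linear_combination (-(Complex.I*(t:ℂ))*(Complex.I*(u:ℂ))*((Complex.I*(u:ℂ)+1)⁻¹*(Complex.I*(u:ℂ)+1))) * inv_mul_cancel₀ (auxA t)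
            + (-(Complex.I*(t:ℂ))*(Complex.I*(u:ℂ))) * inv_mul_cancel₀ (auxB u),
        inv_div, div_eq_mul_inv]
    have e3 : (1 - yt*xu)⁻¹
        = (Complex.I*t+1)*(Complex.I*u-1) * (-1 - Complex.I*((t:ℂ)-u) : ℂ)⁻¹ := by
      rw [hytdef, hxudef,
        show (1:ℂ) - Complex.I*t/(Complex.I*t+1) * (Complex.I*u/(Complex.I*u-1))
          = (-1 - Complex.I*((t:ℂ)-u) : ℂ)/((Complex.I*t+1)*(Complex.I*u-1)) from by
          rw [eq_div_iff (mul_ne_zero (auxB t) (auxA u)), div_eq_mul_inv, div_eq_mul_inv]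
          linear_combination (-(Complex.I*(t:ℂ))*(Complex.I*(u:ℂ))*((Complex.I*(u:ℂ)-1)⁻¹*(Complex.I*(u:ℂ)-1))) * inv_mul_cancel₀ (auxB t)
            + (-(Complex.I*(t:ℂ))*(Complex.I*(u:ℂ))) * inv_mul_cancel₀ (auxA u),
        inv_div, div_eq_mul_inv]
    have e4 : (1 - yt*yu)⁻¹
        = (Complex.I*t+1)*(Complex.I*u+1) * (1 + Complex.I*((t:ℂ)+u) : ℂ)⁻¹ := by
      rw [hytdef, hyudef,
        show (1:ℂ) - Complex.I*t/(Complex.I*t+1) * (Complex.I*u/(Complex.I*u+1))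
          = (1 + Complex.I*((t:ℂ)+u) : ℂ)/((Complex.I*t+1)*(Complex.I*u+1)) from by
          rw [eq_div_iff (mul_ne_zero (auxB t) (auxB u)), div_eq_mul_inv, div_eq_mul_inv]
          linear_combination (-(Complex.I*(t:ℂ))*(Complex.I*(u:ℂ))*((Complex.I*(u:ℂ)+1)⁻¹*(Complex.I*(u:ℂ)+1))) * inv_mul_cancel₀ (auxB t)
            + (-(Complex.I*(t:ℂ))*(Complex.I*(u:ℂ))) * inv_mul_cancel₀ (auxB u),
        inv_div, div_eq_mul_inv]
    rw [e1, e2, e3, e4, hAt, hBt, hAu, hBu, hCt, hDt, hCu, hDu]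
    clear hA hB n1 n2 n3 n4 h1 h2 h3 h4 hxt hyt hxu hyu e1 e2 e3 e4
    clear_value xt yt xu yu At Bt Au Bu Ct Dt Cu Du
    clear hxtdef hytdef hxudef hyudef hAt hBt hAu hBu hCt hDt hCu hDu
    clear xt yt xu yu At Bt Au Bu Ct Dt Cu Du
    exact cauchy_final_alg t u hd d1 d2 d3 d4
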